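/- For the family of discretization maps R_d(q, q̇) = (q − θ q̇, q + (1−θ) q̇) on Q = ℝⁿ with θ ∈ [0,1], and a one-form α = α_{ij} qʲ dqⁱ with constant coefficients α_{ij} for which the matrix (α_{ij} − α_{ji}) is nonzero, the identity R_d*(pr₂* dα − pr₁* dα) = d_T dα holds if and only if θ = 1/2. -/
import Mathlib

private lemma stmt16_aux_antisym {n : ℕ} (h : Fin n → Fin n → ℝ)
    (hh : ∀ i j, h i j + h j i = 0) : ∑ i, ∑ j, h i j = 0 := by
  have h2 : (∑ i, ∑ j, h i j) + (∑ i, ∑ j, h i j) = 0 := by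
    nth_rewrite 2 [Finset.sum_comm]
    simp only [← Finset.sum_add_distrib]
    exact Finset.sum_eq_zero fun i _ => Finset.sum_eq_zero fun j _ => hh i j
  linarith

private lemma stmt16_mpr {n : ℕ} (A : Matrix (Fin n) (Fin n) ℝ)
    (ξ η : (Fin n → ℝ) × (Fin n → ℝ)) :
    (-∑ i, ∑ j, A i j * ((ξ.1 + (1 - 1/2 : ℝ) • ξ.2) i * (η.1 + (1 - 1/2 : ℝ) • η.2) j
        - (ξ.1 + (1 - 1/2 : ℝ) • ξ.2) j * (η.1 + (1 - 1/2 : ℝ) • η.2) i))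
      - (-∑ i, ∑ j, A i j * ((ξ.1 - (1/2 : ℝ) • ξ.2) i * (η.1 - (1/2 : ℝ) • η.2) j
        - (ξ.1 - (1/2 : ℝ) • ξ.2) j * (η.1 - (1/2 : ℝ) • η.2) i))
      = ∑ i, ∑ j, (A j i - A i j) * (ξ.1 i * η.2 j - η.1 i * ξ.2 j) := by
  have key := stmt16_aux_antisym (n := n)
    (fun i j =>
      A i j * ((ξ.1 i - (1/2 : ℝ) * ξ.2 i) * (η.1 j - (1/2 : ℝ) * η.2 j)
          - (ξ.1 j - (1/2 : ℝ) * ξ.2 j) * (η.1 i - (1/2 : ℝ) * η.2 i))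
        - A i j * ((ξ.1 i + (1 - 1/2 : ℝ) * ξ.2 i) * (η.1 j + (1 - 1/2 : ℝ) * η.2 j)
          - (ξ.1 j + (1 - 1/2 : ℝ) * ξ.2 j) * (η.1 i + (1 - 1/2 : ℝ) * η.2 i))
        - (A j i - A i j) * (ξ.1 i * η.2 j - η.1 i * ξ.2 j))
    (by intro i j; ring)
  simp only [Pi.add_apply, Pi.sub_apply, Pi.smul_apply, smul_eq_mul]
  simp only [Finset.sum_sub_distrib] at key
  linarith

private lemma stmt16_mp {n : ℕ} (A : Matrix (Fin n) (Fin n) ℝ)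
    (hA : ∃ i j, A i j ≠ A j i) (θ : ℝ)
    (h : ∀ ξ η : (Fin n → ℝ) × (Fin n → ℝ),
      (-∑ i, ∑ j, A i j * ((ξ.1 + (1 - θ) • ξ.2) i * (η.1 + (1 - θ) • η.2) j
          - (ξ.1 + (1 - θ) • ξ.2) j * (η.1 + (1 - θ) • η.2) i))
        - (-∑ i, ∑ j, A i j * ((ξ.1 - θ • ξ.2) i * (η.1 - θ • η.2) j
          - (ξ.1 - θ • ξ.2) j * (η.1 - θ • η.2) i))
        = ∑ i, ∑ j, (A j i - A i j) * (ξ.1 i * η.2 j - η.1 i * ξ.2 j)) :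
    θ = 1/2 := by
  obtain ⟨i, j, hij⟩ := hA
  have h1 := h (0, (Pi.single i 1 : Fin n → ℝ)) (0, (Pi.single j 1 : Fin n → ℝ))
  simp [Pi.single_apply, mul_ite, ite_mul, mul_sub, sub_mul, Finset.sum_ite_eq,
    Finset.sum_ite_eq', Finset.mul_sum, Finset.sum_sub_distrib, mul_add, mul_neg,
    Finset.sum_add_distrib, Finset.sum_neg_distrib] at h1
  have h2 : (1 - 2*θ) * (A j i - A i j) = 0 := by linear_combination h1
  rcases mul_eq_zero.1 h2 with h' | h'
  · linarith
  · exact absurd (by linarith : A i j = A j i) hij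

/-- For the discretization maps `R_d(q,q̇) = (q − θq̇, q + (1−θ)q̇)` on `ℝⁿ` and a
one-form `α = α_{ij} qʲ dqⁱ` with constant coefficients whose skew part is nonzero, the
pullback identity `R_d*(pr₂*dα − pr₁*dα) = d_T dα` holds iff `θ = 1/2`. -/
theorem stmt16 {n : ℕ} (A : Matrix (Fin n) (Fin n) ℝ)
    (hA : ∃ i j, A i j ≠ A j i) (θ : ℝ) (hθ : θ ∈ Set.Icc (0:ℝ) 1) :
    let E := Fin n → ℝ
    let dα : E → E → ℝ := fun u v => -∑ i, ∑ j, A i j * (u i * v j - u j * v i)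
    let dT : (E × E) → (E × E) → ℝ :=
      fun ξ η => ∑ i, ∑ j, (A j i - A i j) * (ξ.1 i * η.2 j - η.1 i * ξ.2 j)
    (∀ ξ η : E × E,
      dα (ξ.1 + (1 - θ) • ξ.2) (η.1 + (1 - θ) • η.2)
        - dα (ξ.1 - θ • ξ.2) (η.1 - θ • η.2) = dT ξ η) ↔ θ = 1/2 := by
  intro E dα dT
  constructor
  · exact fun h => stmt16_mp A hA θ h
  · intro hhalf ξ η
    subst hhalf
    exact stmt16_mpr A ξ η
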